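/- If r : ℝ → ℝ is a nonnegative integrable function with ∫ r = 1 and r is not a.e. zero, then for every nonzero real k, the Fourier transform satisfies |r̂(k)| < 1, where r̂(k) = ∫ e^{-2πikx} r(x) dx. -/

import Mathlib

open MeasureTheory Real

lemma exp_eq_const_countable (k : ℝ) (hk : k ≠ 0) (φ : ℂ) :
    Set.Countable {x : ℝ | Complex.exp (-2 * (π : ℂ) * Complex.I * (k : ℂ) * (x : ℂ)) = φ} := by
  set S := {x : ℝ | Complex.exp (-2 * (π : ℂ) * Complex.I * (k : ℂ) * (x : ℂ)) = φ} with hS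
  rcases Set.eq_empty_or_nonempty S with h | ⟨x₀, hx₀⟩
  · simp [h]
  · apply Set.Countable.mono (s₁ := S) ?_ (Set.countable_range (fun n : ℤ => x₀ - n / k))
    intro x hx
    have hxx : Complex.exp (-2 * (π : ℂ) * Complex.I * (k : ℂ) * (x : ℂ)) =
        Complex.exp (-2 * (π : ℂ) * Complex.I * (k : ℂ) * (x₀ : ℂ)) := by
      rw [hx, hx₀]
    rw [Complex.exp_eq_exp_iff_exists_int] at hxx
    obtain ⟨n, hn⟩ := hxx
    have hpi : (π : ℂ) ≠ 0 := Complex.ofReal_ne_zero.mpr pi_ne_zero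
    have h2 : ((k * x : ℝ) : ℂ) = ((k * x₀ - n : ℝ) : ℂ) := by
      push_cast
      have h3 : (-2 * (π : ℂ) * Complex.I) * ((k : ℂ) * x) =
          (-2 * (π : ℂ) * Complex.I) * ((k : ℂ) * x₀ - n) := by
        linear_combination hn
      have h4 : (-2 * (π : ℂ) * Complex.I) ≠ 0 := by
        simp [hpi, Complex.I_ne_zero]
      have := mul_left_cancel₀ h4 h3
      linear_combination this
    have h5 : k * x = k * x₀ - n := by exact_mod_cast h2
    refine ⟨n, ?_⟩
    field_simp
    linarith [h5]

theorem fourier_transform_lt_one_of_ne_zero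
    (r : ℝ → ℝ) (hmeas : Measurable r) (hnonneg : ∀ x, 0 ≤ r x)
    (hint : Integrable r) (hnorm : ∫ x, r x = 1)
    (hne : ¬ (r =ᵐ[volume] 0)) :
    ∀ k : ℝ, k ≠ 0 →
      ‖∫ x : ℝ, Complex.exp (-2 * (π : ℂ) * Complex.I * (k : ℂ) * (x : ℂ)) * (r x : ℂ)‖ < 1 := by
  intro k hk
  set e : ℝ → ℂ := fun x => Complex.exp (-2 * (π : ℂ) * Complex.I * (k : ℂ) * (x : ℂ)) with he
  have he_cont : Continuous e := by
    apply Complex.continuous_exp.comp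
    continuity
  have he_norm : ∀ x, ‖e x‖ = 1 := by
    intro x
    rw [he]
    simp only [Complex.norm_exp]
    have h0 : (-2 * (π : ℂ) * Complex.I * (k : ℂ) * (x : ℂ)).re = 0 := by
      simp [Complex.mul_re, Complex.mul_im]
    rw [h0, Real.exp_zero]
  have hfint : Integrable (fun x => e x * (r x : ℂ)) := by
    apply Integrable.mono' hint
    · exact he_cont.aestronglyMeasurable.mul
        (Complex.measurable_ofReal.comp hmeas).aestronglyMeasurable
    · filter_upwards with x
      rw [norm_mul, he_norm, one_mul, Complex.norm_real, Real.norm_eq_abs,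
        abs_of_nonneg (hnonneg x)]
  set c : ℂ := ∫ x, e x * (r x : ℂ) with hc
  show ‖c‖ < 1
  by_cases hc0 : c = 0
  · rw [hc0]; norm_num
  have hcpos : 0 < ‖c‖ := norm_pos_iff.mpr hc0
  set g : ℝ → ℝ := fun x => ((starRingEnd ℂ) c * e x).re * r x with hg
  have hnc : ∀ x, ‖(starRingEnd ℂ) c * e x‖ = ‖c‖ := by
    intro x
    rw [norm_mul, he_norm, mul_one, RCLike.norm_conj]
  have hg_le : ∀ x, g x ≤ ‖c‖ * r x := by
    intro x
    apply mul_le_mul_of_nonneg_right _ (hnonneg x)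
    calc ((starRingEnd ℂ) c * e x).re ≤ ‖(starRingEnd ℂ) c * e x‖ := Complex.re_le_norm _
    _ = ‖c‖ := hnc x
  -- ∫ g = ‖c‖ ^ 2
  have hgint_eq : ∫ x, g x = ‖c‖ ^ 2 := by
    have h1 : Integrable (fun x => (starRingEnd ℂ) c * (e x * (r x : ℂ))) :=
      hfint.const_mul _
    have h2 : ∫ x, g x = ((starRingEnd ℂ) c * c).re := by
      have h3 : ∀ x, g x = ((starRingEnd ℂ) c * (e x * (r x : ℂ))).re := by
        intro x
        simp [hg, Complex.mul_re, Complex.mul_im]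
        ring
      calc ∫ x, g x = ∫ x, ((starRingEnd ℂ) c * (e x * (r x : ℂ))).re := by
            exact integral_congr_ae (Filter.Eventually.of_forall h3)
      _ = ((starRingEnd ℂ) c * c).re := by
            rw [← integral_const_mul]
            exact integral_re h1
    rw [h2, mul_comm, Complex.mul_conj, Complex.normSq_eq_norm_sq,
      Complex.ofReal_re]
  have hgmeas : Measurable g := by
    apply Measurable.mul _ hmeas
    exact Complex.measurable_re.comp (measurable_const.mul he_cont.measurable)
  have hgint : Integrable g := by
    apply Integrable.mono' (hint.const_mul ‖c‖) hgmeas.aestronglyMeasurable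
    filter_upwards with x
    rw [Real.norm_eq_abs, abs_mul]
    calc |((starRingEnd ℂ) c * e x).re| * |r x|
        ≤ ‖(starRingEnd ℂ) c * e x‖ * |r x| := by
          exact mul_le_mul_of_nonneg_right (Complex.abs_re_le_norm _) (abs_nonneg _)
      _ = ‖c‖ * r x := by rw [hnc x, abs_of_nonneg (hnonneg x)]
  -- strict inequality of integrals
  set φ : ℂ := (‖c‖ : ℂ) / (starRingEnd ℂ) c with hφ
  have hS : volume {x : ℝ | e x = φ} = 0 :=
    (exp_eq_const_countable k hk φ).measure_zero _
  have hkey : 0 < ∫ x, (‖c‖ * r x - g x) := by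
    have hintsub : Integrable (fun x => ‖c‖ * r x - g x) := (hint.const_mul ‖c‖).sub hgint
    rw [integral_pos_iff_support_of_nonneg (f := fun x => ‖c‖ * r x - g x)
      (fun x => sub_nonneg.mpr (hg_le x)) hintsub]
    rw [pos_iff_ne_zero]
    intro hnull
    apply hne
    have hsub : {x : ℝ | r x ≠ 0} ⊆
        (Function.support fun x => ‖c‖ * r x - g x) ∪ {x : ℝ | e x = φ} := by
      intro x hx
      by_cases hex : e x = φ
      · exact Or.inr hex
      · left
        simp only [Function.mem_support]
        intro heq
        -- equality forces (conj c * e x).re = ‖c‖, hence conj c * e x = ‖c‖, hence e x = φ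
        have hrpos : 0 < r x := lt_of_le_of_ne (hnonneg x) (Ne.symm hx)
        have hre : ((starRingEnd ℂ) c * e x).re = ‖c‖ := by
          have : (‖c‖ - ((starRingEnd ℂ) c * e x).re) * r x = 0 := by
            simp only [hg] at heq; nlinarith [heq]
          rcases mul_eq_zero.mp this with h | h
          · linarith
          · exact absurd h (ne_of_gt hrpos)
        have him : ((starRingEnd ℂ) c * e x).im = 0 := by
          have habs := hnc x
          have hsq := Complex.sq_norm ((starRingEnd ℂ) c * e x)
          rw [habs, Complex.normSq_apply] at hsq
          have h3 : ((starRingEnd ℂ) c * e x).im ^ 2 = 0 := by nlinarith [hsq, hre]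
          exact pow_eq_zero_iff two_ne_zero |>.mp h3
        have hz : (starRingEnd ℂ) c * e x = (‖c‖ : ℂ) := by
          apply Complex.ext
          · simpa using hre
          · simpa using him
        apply hex
        rw [hφ]
        have hcc : (starRingEnd ℂ) c ≠ 0 := by
          simpa using hc0
        rw [eq_div_iff hcc]
        linear_combination hz
    have : volume {x : ℝ | r x ≠ 0} = 0 := by
      apply measure_mono_null hsub
      exact le_antisymm (le_trans (measure_union_le _ _) (by rw [hnull, hS]; simp)) zero_le
    exact this
  have hfinal : ‖c‖ ^ 2 < ‖c‖ := by
    have := integral_sub (hint.const_mul ‖c‖) hgint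
    rw [this] at hkey
    rw [integral_const_mul, hnorm, mul_one, hgint_eq] at hkey
    linarith
  nlinarith [hcpos]
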